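/- Let p, q be probability distributions on a space Z, let ℓ : X × Z → ℝ be a loss function, and define f(x) = E_{z∼p}[ℓ(x,z)] and g(x) = E_{z∼q}[ℓ(x,z)]. Suppose f and g are m-strongly convex on X with minimizers x_f*, x_g*, and suppose for every x ∈ X, |E_{z∼p}[ℓ(x,z)] - E_{z∼q}[ℓ(x,z)]| ≤ ρ̃. Then ‖x_f* - x_g*‖ ≤ √((2/m)·ρ̃). -/
import Mathlib


open scoped RealInnerProductSpace
open MeasureTheory Filter

/-- Quadratic growth at a minimizer of a strongly convex function. -/
lemma quad_growth {d : ℕ} (X : Set (EuclideanSpace ℝ (Fin d)))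
    (hXconv : Convex ℝ X)
    (φ : EuclideanSpace ℝ (Fin d) → ℝ)
    (φ' : EuclideanSpace ℝ (Fin d) → EuclideanSpace ℝ (Fin d))
    (m : ℝ)
    (hsc : ∀ x ∈ X, ∀ y ∈ X, φ x + ⟪φ' x, y - x⟫ + m / 2 * ‖y - x‖ ^ 2 ≤ φ y)
    (a b : EuclideanSpace ℝ (Fin d)) (ha : a ∈ X) (hb : b ∈ X)
    (hmin : ∀ x ∈ X, φ a ≤ φ x) :
    φ a + m / 2 * ‖b - a‖ ^ 2 ≤ φ b := by
  have key : ∀ t : ℝ, t ∈ Set.Ioc (0:ℝ) 1 →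
      φ a + m / 2 * ‖b - a‖ ^ 2 - φ b ≤ m / 2 * ‖b - a‖ ^ 2 * t := by
    intro t ht
    obtain ⟨ht0, ht1⟩ := ht
    set c : EuclideanSpace ℝ (Fin d) := a + t • (b - a) with hc
    have hcX : c ∈ X := by
      have h := hXconv ha hb (by linarith : (0:ℝ) ≤ 1 - t) ht0.le (by ring)
      have heq : (1 - t) • a + t • b = c := by rw [hc]; module
      rwa [heq] at h
    have hac : a - c = (-t) • (b - a) := by rw [hc]; module
    have hbc : b - c = (1 - t) • (b - a) := by rw [hc]; module
    have h1 := hsc c hcX a ha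
    have h2 := hsc c hcX b hb
    rw [hac] at h1; rw [hbc] at h2
    rw [inner_smul_right, norm_smul] at h1 h2
    have hφc : φ a ≤ φ c := hmin c hcX
    have e1 : ‖(-t : ℝ)‖ = t := by rw [Real.norm_eq_abs, abs_neg, abs_of_pos ht0]
    have e2 : ‖(1 - t : ℝ)‖ = 1 - t := by rw [Real.norm_eq_abs, abs_of_nonneg (by linarith)]
    rw [e1] at h1; rw [e2] at h2
    have h1' := mul_le_mul_of_nonneg_left h1 (by linarith : (0:ℝ) ≤ 1 - t)
    have h2' := mul_le_mul_of_nonneg_left h2 ht0.le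
    have h3 : t * (m / 2 * (1 - t) * ‖b - a‖ ^ 2) ≤ t * (φ b - φ a) := by
      nlinarith [h1', h2', hφc]
    have h4 := le_of_mul_le_mul_left h3 ht0
    nlinarith [h4]
  have hten : Tendsto (fun t : ℝ => m / 2 * ‖b - a‖ ^ 2 * t)
      (nhdsWithin 0 (Set.Ioi 0)) (nhds 0) := by
    have h : Tendsto (fun t : ℝ => m / 2 * ‖b - a‖ ^ 2 * t) (nhds 0)
        (nhds (m / 2 * ‖b - a‖ ^ 2 * 0)) := (continuous_const.mul continuous_id).tendsto 0
    simpa using h.mono_left nhdsWithin_le_nhds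
  have hev : ∀ᶠ t in nhdsWithin (0:ℝ) (Set.Ioi 0),
      φ a + m / 2 * ‖b - a‖ ^ 2 - φ b ≤ m / 2 * ‖b - a‖ ^ 2 * t := by
    filter_upwards [Ioc_mem_nhdsGT_of_mem (by norm_num : (0:ℝ) ∈ Set.Ico (0:ℝ) 1)] with t ht
    exact key t ht
  have := ge_of_tendsto hten hev
  linarith

/-- If `f x = E_{z∼p}[ℓ x z]`, `g x = E_{z∼q}[ℓ x z]` are `m`-strongly convex on `X` with
minimizers `xf, xg`, and `|E_p ℓ(x,·) - E_q ℓ(x,·)| ≤ ρ̃` for all `x ∈ X`, then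
`‖xf - xg‖ ≤ √((2/m)·ρ̃)`. -/
theorem stmt3 {d : ℕ} {Z : Type*} [MeasurableSpace Z]
    (p q : Measure Z) [IsProbabilityMeasure p] [IsProbabilityMeasure q]
    (X : Set (EuclideanSpace ℝ (Fin d)))
    (hX : X.Nonempty) (hXc : IsClosed X) (hXconv : Convex ℝ X)
    (ℓ : EuclideanSpace ℝ (Fin d) → Z → ℝ)
    (f g : EuclideanSpace ℝ (Fin d) → ℝ)
    (hfdef : ∀ x, f x = ∫ z, ℓ x z ∂p)
    (hgdef : ∀ x, g x = ∫ z, ℓ x z ∂q)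
    (f' g' : EuclideanSpace ℝ (Fin d) → EuclideanSpace ℝ (Fin d))
    (hgradf : ∀ x ∈ X, HasGradientAt f (f' x) x)
    (hgradg : ∀ x ∈ X, HasGradientAt g (g' x) x)
    (m : ℝ) (hm : 0 < m)
    (hscf : ∀ x ∈ X, ∀ y ∈ X,
      f x + ⟪f' x, y - x⟫ + m / 2 * ‖y - x‖ ^ 2 ≤ f y)
    (hscg : ∀ x ∈ X, ∀ y ∈ X,
      g x + ⟪g' x, y - x⟫ + m / 2 * ‖y - x‖ ^ 2 ≤ g y)
    (xf xg : EuclideanSpace ℝ (Fin d)) (hxf : xf ∈ X) (hxg : xg ∈ X)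
    (hminf : ∀ x ∈ X, f xf ≤ f x) (hming : ∀ x ∈ X, g xg ≤ g x)
    (ρ : ℝ)
    (hipm : ∀ x ∈ X, |(∫ z, ℓ x z ∂p) - ∫ z, ℓ x z ∂q| ≤ ρ) :
    ‖xf - xg‖ ≤ Real.sqrt (2 / m * ρ) := by
  have hquadf := quad_growth X hXconv f f' m hscf xf xg hxf hxg hminf
  have hquadg := quad_growth X hXconv g g' m hscg xg xf hxg hxf hming
  have hdiff1 : f xg - g xg ≤ ρ := by
    have := hipm xg hxg
    rw [hfdef, hgdef]
    exact (abs_le.mp this).2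
  have hdiff2 : g xf - f xf ≤ ρ := by
    have := hipm xf hxf
    rw [hfdef, hgdef]
    have := (abs_le.mp this).1
    linarith
  have hnrev : ‖xf - xg‖ = ‖xg - xf‖ := norm_sub_rev _ _
  have hsq : ‖xf - xg‖ ^ 2 ≤ 2 / m * ρ := by
    rw [hnrev]
    have hmD : m * ‖xg - xf‖ ^ 2 ≤ 2 * ρ := by
      rw [norm_sub_rev xf xg] at hquadg
      linarith [hquadf, hquadg]
    rw [div_mul_eq_mul_div, le_div_iff₀ hm]
    nlinarith [hmD]
  have hs := Real.sqrt_le_sqrt hsq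
  rwa [Real.sqrt_sq (norm_nonneg _)] at hs
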